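/- Let $M \subset \mathbb{R}^d$ be a Borel set of $\sigma$-finite $(d-1)$-dimensional Hausdorff measure. Then for almost every unit vector $v \in S^{d-1}$ (with respect to the surface measure on the unit sphere), the set of points $y$ in the orthogonal complement $v^{\perp}$ for which the line $\{y + t v : t \in \mathbb{R}\}$ intersects $M$ in an uncountable set has $(d-1)$-dimensional Hausdorff measure zero. -/

import Mathlib

open MeasureTheory ENNReal

variable {d : ℕ}

local notation "E" => EuclideanSpace ℝ (Fin d)

lemma counting (hd : 0 < d) (P : E → E) (hP : LipschitzWith 1 P)
    (T : E → ℝ) (hT : Measurable T)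
    (hinj : ∀ x x' : E, P x = P x' → T x = T x' → x = x')
    (A : Set (EuclideanSpace ℝ (Fin d))) (hA : MeasurableSet A)
    (hAfin : μH[(d : ℝ) - 1] A < ⊤) :
    μH[(d : ℝ) - 1] {y : E | (A ∩ P ⁻¹' {y}).Infinite} = 0 := by
  set μ : Measure E := μH[(d : ℝ) - 1] with hμ
  have hd1 : (0:ℝ) ≤ (d : ℝ) - 1 := by
    have : (1:ℝ) ≤ d := by exact_mod_cast hd
    linarith
  -- slabs
  set g : ℕ → E → ℤ := fun m x => ⌊T x * 2 ^ m⌋ with hg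
  have hgmeas : ∀ m, Measurable (g m) := by
    intro m
    exact Int.measurable_floor.comp ((hT.mul measurable_const))
  set B : ℕ → ℤ → Set E := fun m j => P '' (A ∩ g m ⁻¹' {j}) with hB
  set C : ℕ → ℤ → Set E := fun m j => toMeasurable μ (B m j) with hC
  set f : ℕ → E → ℝ≥0∞ := fun m y => ∑' j : ℤ, (C m j).indicator 1 y with hf
  have hfmeas : ∀ m, Measurable (f m) := by
    intro m
    exact Measurable.ennreal_tsum fun j =>
      (measurable_one.indicator (measurableSet_toMeasurable μ _))
  have hsum : ∀ m, ∑' j : ℤ, μ (A ∩ g m ⁻¹' {j}) = μ A := by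
    intro m
    rw [← measure_iUnion]
    · congr 1
      ext x
      simp only [Set.mem_iUnion, Set.mem_inter_iff, Set.mem_preimage, Set.mem_singleton_iff]
      exact ⟨fun ⟨j, h⟩ => h.1, fun h => ⟨g m x, h, rfl⟩⟩
    · intro i j hij
      simp only [Function.onFun, Set.disjoint_left]
      rintro x ⟨-, hxi⟩ ⟨-, hxj⟩
      exact hij (hxi.symm.trans hxj)
    · intro j
      exact hA.inter ((hgmeas m) (measurableSet_singleton j))
  have hint : ∀ m, ∫⁻ y, f m y ∂μ ≤ μ A := by
    intro m
    rw [hf]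
    simp only
    rw [lintegral_tsum fun j => (measurable_one.indicator (measurableSet_toMeasurable μ _)).aemeasurable]
    calc ∑' j : ℤ, ∫⁻ y, (C m j).indicator 1 y ∂μ
        = ∑' j : ℤ, μ (C m j) := by
          congr 1; ext j
          rw [lintegral_indicator_one (measurableSet_toMeasurable μ _)]
      _ = ∑' j : ℤ, μ (B m j) := by
          congr 1; ext j; exact (measure_toMeasurable _)
      _ ≤ ∑' j : ℤ, μ (A ∩ g m ⁻¹' {j}) := by
          apply ENNReal.tsum_le_tsum
          intro j
          have := hP.hausdorffMeasure_image_le hd1 (A ∩ g m ⁻¹' {j})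
          simpa using this
      _ = μ A := hsum m
  have hmarkov : ∀ (n : ℕ) m, (n : ℝ≥0∞) * μ {y | (n : ℝ≥0∞) ≤ f m y} ≤ μ A := by
    intro n m
    exact le_trans (mul_meas_ge_le_lintegral₀ (hfmeas m).aemeasurable n) (hint m)
  set Z : ℕ → ℕ → Set E := fun n m => {y | (n : ℝ≥0∞) ≤ f m y} with hZ
  have hZmeas : ∀ n m, MeasurableSet (Z n m) :=
    fun n m => measurableSet_le measurable_const (hfmeas m)
  set Y : Set E := {y : E | (A ∩ P ⁻¹' {y}).Infinite} with hY
  have hstep5 : ∀ n : ℕ, Y ⊆ ⋃ m0 : ℕ, ⋂ m, ⋂ (_ : m0 ≤ m), Z n m := by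
    intro n y hy
    obtain ⟨t, hts, htcard⟩ := hy.exists_subset_card_eq n
    have hPy : ∀ x ∈ t, P x = y := fun x hx => (hts hx).2
    have hTinj : ∀ x ∈ t, ∀ x' ∈ t, T x = T x' → x = x' := by
      intro x hx x' hx' h
      exact hinj x x' ((hPy x hx).trans (hPy x' hx').symm) h
    -- eventually the floors separate the points of t
    have hev : ∀ᶠ m in Filter.atTop, ∀ x ∈ t, ∀ x' ∈ t, x ≠ x' → g m x ≠ g m x' := by
      simp only [Filter.eventually_all_finset]
      intro x hx x' hx'
      rcases eq_or_ne x x' with rfl | hne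
      · exact Filter.Eventually.of_forall fun m h => absurd rfl h
      have hTne : T x ≠ T x' := fun h => hne (hTinj x hx x' hx' h)
      have hδ : 0 < |T x - T x'| := abs_pos.mpr (sub_ne_zero.mpr hTne)
      have htend : Filter.Tendsto (fun m : ℕ => (2:ℝ) ^ m) Filter.atTop Filter.atTop :=
        tendsto_pow_atTop_atTop_of_one_lt one_lt_two
      filter_upwards [htend.eventually_ge_atTop (1 / |T x - T x'|)] with m hm
      intro hne heq
      have h1 : (1:ℝ) ≤ |T x - T x'| * 2 ^ m := by
        rw [div_le_iff₀ hδ] at hm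
        linarith [hm]
      have h2 : |T x * 2 ^ m - T x' * 2 ^ m| < 1 := by
        have ha := Int.floor_le (T x * 2 ^ m)
        have hb := Int.lt_floor_add_one (T x * 2 ^ m)
        have hc := Int.floor_le (T x' * 2 ^ m)
        have hd' := Int.lt_floor_add_one (T x' * 2 ^ m)
        have heq' : ⌊T x * 2 ^ m⌋ = ⌊T x' * 2 ^ m⌋ := heq
        rw [heq'] at ha hb
        rw [abs_lt]; constructor <;> nlinarith
      rw [← sub_mul, abs_mul, abs_of_pos (by positivity : (0:ℝ) < (2:ℝ)^m)] at h2
      linarith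
    obtain ⟨m0, hm0⟩ := Filter.eventually_atTop.mp hev
    refine Set.mem_iUnion.mpr ⟨m0, ?_⟩
    simp only [Set.mem_iInter]
    intro m hm
    have hginj : Set.InjOn (g m) ↑t := fun x hx x' hx' h => by
      by_contra hne
      exact hm0 m hm x hx x' hx' hne h
    -- y belongs to C m (g m x) for each x in t
    have hyC : ∀ x ∈ t, y ∈ C m (g m x) := by
      intro x hx
      apply subset_toMeasurable
      exact ⟨x, ⟨(hts hx).1, rfl⟩, hPy x hx⟩
    -- lower bound for f m y
    show (n : ℝ≥0∞) ≤ f m y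
    calc (n : ℝ≥0∞) = ∑ j ∈ t.image (g m), 1 := by
          rw [Finset.sum_const, Finset.card_image_of_injOn hginj, htcard, nsmul_eq_mul, mul_one]
      _ = ∑ j ∈ t.image (g m), (C m j).indicator 1 y := by
          apply Finset.sum_congr rfl
          intro j hj
          obtain ⟨x, hx, rfl⟩ := Finset.mem_image.mp hj
          rw [Set.indicator_of_mem (hyC x hx)]
          rfl
      _ ≤ ∑' j : ℤ, (C m j).indicator 1 y := ENNReal.sum_le_tsum _
  -- combine
  have hkey : ∀ n : ℕ, (n : ℝ≥0∞) * μ Y ≤ μ A := by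
    intro n
    have hYle : μ Y ≤ ⨆ m0 : ℕ, μ (⋂ m, ⋂ (_ : m0 ≤ m), Z n m) := by
      refine le_trans (measure_mono (hstep5 n)) ?_
      rw [Directed.measure_iUnion]
      apply Monotone.directed_le
      intro a b hab
      exact Set.iInter₂_mono' fun m hm => ⟨m, le_trans hab hm, le_rfl⟩
    calc (n : ℝ≥0∞) * μ Y ≤ (n : ℝ≥0∞) * ⨆ m0 : ℕ, μ (⋂ m, ⋂ (_ : m0 ≤ m), Z n m) := by
          exact mul_le_mul_right hYle _
      _ = ⨆ m0 : ℕ, (n : ℝ≥0∞) * μ (⋂ m, ⋂ (_ : m0 ≤ m), Z n m) := by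
          rw [ENNReal.mul_iSup]
      _ ≤ μ A := by
          apply iSup_le
          intro m0
          refine le_trans ?_ (hmarkov n m0)
          apply mul_le_mul_right
          exact measure_mono (Set.iInter₂_subset m0 le_rfl)
  -- conclude
  by_contra h
  have hYpos : μ Y ≠ 0 := h
  have hdiv : μ A / μ Y < ⊤ := ENNReal.div_lt_top hAfin.ne hYpos
  obtain ⟨n, hn⟩ := ENNReal.exists_nat_gt hdiv.ne
  have : μ A < n * μ Y := by
    rwa [ENNReal.div_lt_iff (Or.inl hYpos) (Or.inr hAfin.ne)] at hn
  exact absurd (hkey n) (not_le.mpr this)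

theorem statement10 (d : ℕ) (hd : 0 < d) (M : Set (EuclideanSpace ℝ (Fin d)))
    (hM : MeasurableSet M)
    (hσ : ∃ s : ℕ → Set (EuclideanSpace ℝ (Fin d)),
      (M ⊆ ⋃ k, s k) ∧ ∀ k, μH[(d : ℝ) - 1] (s k) < ⊤) :
    ∀ᵐ v ∂(μH[(d : ℝ) - 1].restrict
        (Metric.sphere (0 : EuclideanSpace ℝ (Fin d)) 1)),
      μH[(d : ℝ) - 1] {y : EuclideanSpace ℝ (Fin d) |
        y ∈ (Submodule.span ℝ {v})ᗮ ∧
          ¬ (M ∩ {x | ∃ t : ℝ, x = y + t • v}).Countable} = 0 := by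
  obtain ⟨s, hsub, hfin⟩ := hσ
  set μ : Measure (EuclideanSpace ℝ (Fin d)) := μH[(d : ℝ) - 1] with hμdef
  have hsphere : MeasurableSet (Metric.sphere (0 : EuclideanSpace ℝ (Fin d)) 1) :=
    (Metric.isClosed_sphere).measurableSet
  refine (ae_restrict_mem hsphere).mono ?_
  intro v hv
  have hvnorm : ‖v‖ = 1 := by simpa using hv
  set K : Submodule ℝ (EuclideanSpace ℝ (Fin d)) := (Submodule.span ℝ {v})ᗮ with hK
  have hvK : v ∈ Kᗮ :=
    (Submodule.span ℝ {v}).le_orthogonal_orthogonal (Submodule.mem_span_singleton_self v)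
  have hKo : Kᗮ = Submodule.span ℝ {v} := Submodule.orthogonal_orthogonal _
  set P : EuclideanSpace ℝ (Fin d) → EuclideanSpace ℝ (Fin d) :=
    fun x => (K.orthogonalProjectionOnto x : EuclideanSpace ℝ (Fin d)) with hPdef
  set T : EuclideanSpace ℝ (Fin d) → ℝ := fun x => (inner ℝ x v : ℝ) with hTdef
  have hP : LipschitzWith 1 P := by
    apply LipschitzWith.of_dist_le_mul
    intro x y
    simp only [NNReal.coe_one, one_mul, dist_eq_norm]
    have : P x - P y = (K.orthogonalProjectionOnto (x - y) : EuclideanSpace ℝ (Fin d)) := by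
      simp [hPdef, map_sub]
    rw [this]
    calc ‖(K.orthogonalProjectionOnto (x - y) : EuclideanSpace ℝ (Fin d))‖
        = ‖K.orthogonalProjectionOnto (x - y)‖ := rfl
      _ ≤ ‖K.orthogonalProjectionOnto‖ * ‖x - y‖ := (K.orthogonalProjectionOnto).le_opNorm _
      _ ≤ 1 * ‖x - y‖ := by
          exact mul_le_mul_of_nonneg_right (Submodule.orthogonalProjectionOnto_norm_le K) (norm_nonneg _)
      _ = ‖x - y‖ := one_mul _
  have hT : Measurable T := ((continuous_id.inner continuous_const)).measurable
  -- decomposition of any x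
  have hdecomp : ∀ x : EuclideanSpace ℝ (Fin d), ∃ c : ℝ, x = P x + c • v ∧ T x = c := by
    intro x
    have hmem : x - (K.orthogonalProjectionOnto x : EuclideanSpace ℝ (Fin d)) ∈ Kᗮ :=
      K.sub_starProjection_mem_orthogonal x
    rw [hKo, Submodule.mem_span_singleton] at hmem
    obtain ⟨c, hc⟩ := hmem
    refine ⟨c, by rw [hc]; abel, ?_⟩
    have hPxK : P x ∈ K := (K.orthogonalProjectionOnto x).2
    have h0 : (inner ℝ (P x) v : ℝ) = 0 := Submodule.inner_right_of_mem_orthogonal hPxK hvK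
    have : x = P x + c • v := by rw [hc]; abel
    rw [hTdef]
    simp only
    rw [this, inner_add_left, h0, real_inner_smul_left, real_inner_self_eq_norm_sq, hvnorm]
    ring
  have hinj : ∀ x x' : EuclideanSpace ℝ (Fin d), P x = P x' → T x = T x' → x = x' := by
    intro x x' h1 h2
    obtain ⟨c, hc, hTc⟩ := hdecomp x
    obtain ⟨c', hc', hTc'⟩ := hdecomp x'
    rw [hc, hc', h1, ← hTc, ← hTc', h2]
  -- fiber characterization
  have hfiber : ∀ y : EuclideanSpace ℝ (Fin d), y ∈ K →
      {x : EuclideanSpace ℝ (Fin d) | ∃ t : ℝ, x = y + t • v} = P ⁻¹' {y} := by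
    intro y hy
    ext x
    simp only [Set.mem_setOf_eq, Set.mem_preimage, Set.mem_singleton_iff]
    constructor
    · rintro ⟨t, rfl⟩
      have hPv : K.orthogonalProjectionOnto v = 0 :=
        Submodule.orthogonalProjectionOnto_apply_of_mem_orthogonal hvK
      have hPy : (K.orthogonalProjectionOnto y : EuclideanSpace ℝ (Fin d)) = y :=
        K.starProjection_eq_self_iff.mpr hy
      simp [hPdef, map_add, _root_.map_smul, hPv, hPy, K.starProjection_eq_self_iff.mpr hy,
        (show K.starProjection v = 0 by rw [Submodule.starProjection_apply, hPv]; rfl)]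
    · intro hPx
      obtain ⟨c, hc, -⟩ := hdecomp x
      exact ⟨c, by rw [hc, hPx]⟩
  -- main estimate
  set A : ℕ → Set (EuclideanSpace ℝ (Fin d)) := fun k => toMeasurable μ (s k) with hA
  have hsubset : {y : EuclideanSpace ℝ (Fin d) |
        y ∈ (Submodule.span ℝ {v})ᗮ ∧
          ¬ (M ∩ {x | ∃ t : ℝ, x = y + t • v}).Countable} ⊆
      ⋃ k : ℕ, {y : EuclideanSpace ℝ (Fin d) | (A k ∩ P ⁻¹' {y}).Infinite} := by
    rintro y ⟨hyK, hync⟩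
    rw [hfiber y hyK] at hync
    by_contra hall
    simp only [Set.mem_iUnion, Set.mem_setOf_eq, not_exists, Set.not_infinite] at hall
    apply hync
    have hMsub : M ∩ P ⁻¹' {y} ⊆ ⋃ k : ℕ, (A k ∩ P ⁻¹' {y}) := by
      rintro x ⟨hxM, hxP⟩
      obtain ⟨k, hk⟩ := Set.mem_iUnion.mp (hsub hxM)
      exact Set.mem_iUnion.mpr ⟨k, subset_toMeasurable μ (s k) hk, hxP⟩
    exact Set.Countable.mono hMsub (Set.countable_iUnion fun k => (hall k).countable)
  refine measure_mono_null hsubset ?_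
  refine measure_iUnion_null fun k => ?_
  exact counting hd P hP T hT hinj (A k) (measurableSet_toMeasurable μ _)
    (by rw [hA]; simp only; rw [measure_toMeasurable]; exact hfin k)
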